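/- Let M ∈ ℝ^{n×m} with n ≥ m, and suppose M = UΣVᵀ is a reduced SVD with U ∈ ℝ^{n×m}, UᵀU = I_m, V ∈ ℝ^{m×m} orthogonal, Σ diagonal with nonnegative entries. Then for every D ∈ ℝ^{n×m} with DᵀD = I_m, Tr(MᵀD) ≤ Tr(Σ), with equality when D = UVᵀ. -/
import Mathlib

open Matrix Finset


/-- Procrustes / von Neumann trace bound: if `M = UΣVᵀ` is a reduced SVD then
`Tr(MᵀD) ≤ Tr(Σ)` for every `D` with orthonormal columns, with equality at
`D = UVᵀ`. -/
theorem procrustes_trace_bound (n m : ℕ) (hnm : m ≤ n)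
    (Mmat : Matrix (Fin n) (Fin m) ℝ)
    (U : Matrix (Fin n) (Fin m) ℝ) (S V : Matrix (Fin m) (Fin m) ℝ)
    (hU : Uᵀ * U = 1) (hV : Vᵀ * V = 1) (hV' : V * Vᵀ = 1)
    (hS : S.IsDiag) (hSpos : ∀ i, 0 ≤ S i i)
    (hSVD : Mmat = U * S * Vᵀ) :
    (∀ D : Matrix (Fin n) (Fin m) ℝ, Dᵀ * D = 1 →
        (Mmatᵀ * D).trace ≤ S.trace) ∧
    (Mmatᵀ * (U * Vᵀ)).trace = S.trace := by
  have hStrans : Sᵀ = S := by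
    ext i j
    rcases eq_or_ne i j with rfl | h
    · rfl
    · rw [Matrix.transpose_apply, hS h, hS (Ne.symm h)]
  have hMT : Mmatᵀ = V * S * Uᵀ := by
    rw [hSVD, Matrix.transpose_mul, Matrix.transpose_mul, hStrans,
      Matrix.transpose_transpose, Matrix.mul_assoc]
  constructor
  · intro D hD
    set W := D * V with hWdef
    have hW : Wᵀ * W = 1 := by
      rw [hWdef, Matrix.transpose_mul, Matrix.mul_assoc, ← Matrix.mul_assoc Dᵀ, hD,
        Matrix.one_mul, hV]
    have htr : (Mmatᵀ * D).trace = (S * (Uᵀ * W)).trace := by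
      rw [hMT]
      rw [show V * S * Uᵀ * D = V * (S * (Uᵀ * D)) by
        simp [Matrix.mul_assoc]]
      rw [Matrix.trace_mul_comm, hWdef]
      congr 1
      simp [Matrix.mul_assoc]
    rw [htr]
    set Q := Uᵀ * W with hQdef
    have hdiagQ : ∀ i, Q i i ≤ 1 := by
      intro i
      have hu : ∑ k, U k i ^ 2 = 1 := by
        have := congrArg (fun A => A i i) hU
        simpa [Matrix.mul_apply, Matrix.transpose_apply, sq] using this
      have hw : ∑ k, W k i ^ 2 = 1 := by
        have := congrArg (fun A => A i i) hW
        simpa [Matrix.mul_apply, Matrix.transpose_apply, sq] using this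
      have hcs := Finset.sum_mul_sq_le_sq_mul_sq Finset.univ (fun k => U k i)
        (fun k => W k i)
      rw [hu, hw, mul_one] at hcs
      have hQi : Q i i = ∑ k, U k i * W k i := by
        simp [hQdef, Matrix.mul_apply, Matrix.transpose_apply]
      rw [hQi]
      nlinarith [hcs]
    have hSQ : (S * Q).trace = ∑ i, S i i * Q i i := by
      rw [Matrix.trace]
      refine Finset.sum_congr rfl fun i _ => ?_
      rw [Matrix.diag_apply, Matrix.mul_apply]
      refine Finset.sum_eq_single i (fun j _ hj => ?_) (by simp)
      rw [hS (Ne.symm hj), zero_mul]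
    rw [hSQ, Matrix.trace]
    refine Finset.sum_le_sum fun i _ => ?_
    calc S i i * Q i i ≤ S i i * 1 := by
          exact mul_le_mul_of_nonneg_left (hdiagQ i) (hSpos i)
      _ = S i i := mul_one _
  · rw [hMT]
    rw [show V * S * Uᵀ * (U * Vᵀ) = V * S * (Uᵀ * U) * Vᵀ by simp [Matrix.mul_assoc], hU,
      Matrix.mul_one, Matrix.trace_mul_comm, ← Matrix.mul_assoc, hV, Matrix.one_mul]
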